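/- A minimal tight IC POVM {Π_j}_{j=0}^{d²-1} on ℂ^d is a generalized SIC if and only if tr(Π_j) is independent of j. -/
import Mathlib
set_option maxHeartbeats 1000000


open Matrix ComplexOrder

noncomputable section

abbrev Mat (d : ℕ) := Matrix (Fin d) (Fin d) ℂ

/-- The real vector space of Hermitian `d × d` complex matrices. -/
abbrev HermM (d : ℕ) : Submodule ℝ (Mat d) := selfAdjoint.submodule ℝ (Mat d)

/-- The identity matrix as a Hermitian matrix. -/
def hermOne (d : ℕ) : HermM d := ⟨1, IsSelfAdjoint.one (Mat d)⟩

/-- The superoperator `|A⟩⟩⟨⟨B| : X ↦ tr(B X) • A` on Hermitian matrices. -/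
def outerSO (d : ℕ) (A B : HermM d) : HermM d →ₗ[ℝ] HermM d :=
  (Complex.reLm ∘ₗ Matrix.traceLinearMap (Fin d) ℝ ℂ ∘ₗ
    LinearMap.mulLeft ℝ (B : Mat d) ∘ₗ (HermM d).subtype).smulRight A

lemma mem_hermM' {d : ℕ} {x : Mat d} : x ∈ HermM d ↔ star x = x := Iff.rfl

lemma rsmul_eq_csmul' {d : ℕ} (r : ℝ) (x : Mat d) : r • x = (r : ℂ) • x := by
  rw [← algebraMap_smul ℂ r x]; rfl

/-- Decomposition of a complex matrix into Hermitian real and imaginary parts. -/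
def matDecomp' (d : ℕ) : Mat d ≃ₗ[ℝ] HermM d × HermM d where
  toFun x := (⟨((1:ℝ)/2) • (x + star x), by
      rw [mem_hermM', rsmul_eq_csmul', star_smul, star_add, star_star]
      simp [add_comm]⟩,
    ⟨(-(Complex.I)/2) • (x - star x), by
      rw [mem_hermM', star_smul, star_sub, star_star]
      rw [show star (-(Complex.I)/2) = Complex.I/2 by simp [Complex.star_def]]
      rw [smul_sub, smul_sub, neg_div, neg_smul, neg_smul, neg_sub_neg]⟩)
  invFun p := (p.1 : Mat d) + Complex.I • (p.2 : Mat d)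
  map_add' x y := by
    ext1 <;> ext1 <;> simp [smul_add, add_add_add_comm, add_sub_add_comm]
  map_smul' r x := by
    ext1 <;> ext1 <;> simp [smul_comm r, smul_add, smul_sub]
  left_inv x := by
    simp only [smul_smul]
    rw [show Complex.I * (-(Complex.I)/2) = (1:ℂ)/2 by
      rw [mul_div_assoc', mul_neg, Complex.I_mul_I, neg_neg]]
    rw [rsmul_eq_csmul', Complex.ofReal_div, Complex.ofReal_one, Complex.ofReal_ofNat, ← smul_add]
    rw [show x + star x + (x - star x) = (2:ℂ) • x by rw [two_smul]; abel]
    rw [smul_smul]; norm_num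
  right_inv p := by
    obtain ⟨⟨a, ha⟩, ⟨b, hb⟩⟩ := p
    rw [mem_hermM'] at ha hb
    refine Prod.ext (Subtype.ext ?_) (Subtype.ext ?_) <;>
      simp only [star_add, star_smul, Complex.star_def, Complex.conj_I, ha, hb, neg_smul]
    · rw [show a + Complex.I • b + (a + -(Complex.I • b)) = (2:ℂ) • a by rw [two_smul]; abel]
      rw [rsmul_eq_csmul', smul_smul]
      norm_num
    · rw [show a + Complex.I • b - (a + -(Complex.I • b)) = (2:ℂ) • (Complex.I • b) by
        rw [two_smul]; abel]
      rw [smul_smul, smul_smul]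
      rw [show -Complex.I/2 * 2 * Complex.I = 1 by
        rw [div_mul_cancel₀ _ (two_ne_zero), neg_mul, Complex.I_mul_I, neg_neg]]
      simp

lemma finrank_hermM' (d : ℕ) : Module.finrank ℝ (HermM d) = d ^ 2 := by
  have h1 : Module.finrank ℝ (Mat d) = d ^ 2 * 2 := by
    have h : Module.finrank ℝ (Mat d) = Module.finrank ℝ (Fin d → Fin d → ℂ) := rfl
    rw [h, Module.finrank_pi_fintype, Module.finrank_pi_fintype]
    simp only [Complex.finrank_real_complex, Finset.sum_const, Finset.card_univ,
      Fintype.card_fin, smul_eq_mul]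
    ring
  have h2 : Module.finrank ℝ (Mat d)
      = Module.finrank ℝ (HermM d) + Module.finrank ℝ (HermM d) := by
    rw [(matDecomp' d).finrank_eq, Module.finrank_prod]
  omega

lemma outerSO_apply' (d : ℕ) (A B x : HermM d) :
    outerSO d A B x = (Matrix.trace ((B : Mat d) * (x : Mat d))).re • A := rfl

/-- A minimal tight IC POVM is a generalized SIC iff tr(Π_j) is
independent of j. -/
theorem minimal_tightIC_genSIC_iff_const_trace (d : ℕ) (hd : 2 ≤ d)
    (P : Fin (d ^ 2) → HermM d) (α β : ℝ)
    (hpsd : ∀ j, ((P j : Mat d)).PosSemidef)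
    (htrpos : ∀ j, 0 < (Matrix.trace (P j : Mat d)).re)
    (hsum : ∑ j, (P j : Mat d) = 1)
    (hIC : ∀ A : Mat d, A.IsHermitian →
      A ∈ Submodule.span ℝ (Set.range fun j => (P j : Mat d)))
    (hα : 0 < α) (hβ : 0 < β)
    (hframe : (d : ℝ) • ∑ j, ((Matrix.trace (P j : Mat d)).re)⁻¹ • outerSO d (P j) (P j) =
      α • LinearMap.id + β • outerSO d (hermOne d) (hermOne d)) :
    (∃ α' ζ : ℝ, 0 < α' ∧ ∀ j k,
        Matrix.trace (((d : ℂ) • (P j : Mat d)) * ((d : ℂ) • (P k : Mat d))) =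
          if j = k then ((α' : ℂ) + (ζ : ℂ)) else (ζ : ℂ)) ↔
      (∃ t : ℂ, ∀ j, Matrix.trace (P j : Mat d) = t) := by
  have hd0 : (d : ℂ) ≠ 0 := Nat.cast_ne_zero.mpr (by omega)
  have hd0' : (d : ℝ) ≠ 0 := Nat.cast_ne_zero.mpr (by omega)
  -- the key scaling identity
  have hscale : ∀ j k, Matrix.trace (((d : ℂ) • (P j : Mat d)) * ((d : ℂ) • (P k : Mat d)))
      = (d : ℂ) * (d : ℂ) * Matrix.trace ((P j : Mat d) * (P k : Mat d)) := by
    intro j k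
    rw [smul_mul_smul_comm, trace_smul, smul_eq_mul]
  constructor
  · rintro ⟨α', ζ, hα', h⟩
    refine ⟨((α' : ℂ) + (d : ℂ) ^ 2 * (ζ : ℂ)) / ((d : ℂ) * (d : ℂ)), fun j => ?_⟩
    have h1 : ∑ k, Matrix.trace (((d : ℂ) • (P j : Mat d)) * ((d : ℂ) • (P k : Mat d)))
        = (d : ℂ) * (d : ℂ) * Matrix.trace (P j : Mat d) := by
      calc ∑ k, Matrix.trace (((d : ℂ) • (P j : Mat d)) * ((d : ℂ) • (P k : Mat d)))
          = ∑ k, (d : ℂ) * (d : ℂ) * Matrix.trace ((P j : Mat d) * (P k : Mat d)) :=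
            Finset.sum_congr rfl (fun k _ => hscale j k)
        _ = (d : ℂ) * (d : ℂ) * ∑ k, Matrix.trace ((P j : Mat d) * (P k : Mat d)) := by
            rw [Finset.mul_sum]
        _ = (d : ℂ) * (d : ℂ) * Matrix.trace ((P j : Mat d) * ∑ k, (P k : Mat d)) := by
            congr 1; rw [Finset.mul_sum, trace_sum]
        _ = (d : ℂ) * (d : ℂ) * Matrix.trace (P j : Mat d) := by rw [hsum, mul_one]
    have h2 : ∑ k, Matrix.trace (((d : ℂ) • (P j : Mat d)) * ((d : ℂ) • (P k : Mat d)))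
        = (α' : ℂ) + (d : ℂ) ^ 2 * (ζ : ℂ) := by
      calc ∑ k, Matrix.trace (((d : ℂ) • (P j : Mat d)) * ((d : ℂ) • (P k : Mat d)))
          = ∑ k, ((if j = k then (α' : ℂ) else 0) + (ζ : ℂ)) := by
            refine Finset.sum_congr rfl (fun k _ => ?_)
            rw [h j k]; split <;> simp
        _ = (α' : ℂ) + (d : ℂ) ^ 2 * (ζ : ℂ) := by
            rw [Finset.sum_add_distrib, Finset.sum_ite_eq, if_pos (Finset.mem_univ j)]
            simp [Finset.card_univ, mul_comm]
    rw [eq_div_iff (by simp [hd0]), mul_comm, ← h1, h2]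
  · rintro ⟨t, ht⟩
    -- trace of each element is 1/d
    have htval : t = (d : ℂ)⁻¹ := by
      have h1 : ∑ j, Matrix.trace (P j : Mat d) = (d : ℂ) := by
        rw [← trace_sum, hsum, trace_one]; simp
      rw [Finset.sum_congr rfl (fun j _ => ht j), Finset.sum_const, Finset.card_univ,
        Fintype.card_fin, nsmul_eq_mul] at h1
      push_cast at h1
      have h3 : (d : ℂ) * t = 1 := by
        apply mul_left_cancel₀ hd0
        rw [mul_one]; linear_combination h1
      exact eq_inv_of_mul_eq_one_left (by linear_combination h3)
    have htre : ∀ j, (Matrix.trace (P j : Mat d)).re = (d : ℝ)⁻¹ := by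
      intro j
      rw [ht j, htval, show ((d : ℂ))⁻¹ = (((d : ℝ)⁻¹ : ℝ) : ℂ) by push_cast; ring]
      exact Complex.ofReal_re _
    -- sum of the POVM elements is hermOne
    have hsum' : ∑ j, P j = hermOne d := by
      apply Subtype.ext
      rw [show ((∑ j, P j : HermM d) : Mat d) = ∑ j, (P j : Mat d) by
        exact Submodule.coe_sum _ _ _]
      exact hsum
    -- linear independence
    have hspan : ⊤ ≤ Submodule.span ℝ (Set.range P) := by
      intro x _
      have hx : (x : Mat d) ∈ Submodule.span ℝ (Set.range fun j => (P j : Mat d)) :=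
        hIC x.1 x.2
      have himg : (Set.range fun j => (P j : Mat d)) = (HermM d).subtype '' Set.range P := by
        rw [← Set.range_comp]; rfl
      rw [himg, ← Submodule.map_span] at hx
      obtain ⟨y, hy, hyx⟩ := hx
      rwa [show y = x from Subtype.ext hyx] at hy
    have hli : LinearIndependent ℝ P :=
      linearIndependent_of_top_le_span_of_card_eq_finrank hspan
        (by simp [finrank_hermM'])
    -- apply the frame condition to P k
    have key : ∀ j k, (d : ℝ) * ((d : ℝ) * (Matrix.trace ((P j : Mat d) * (P k : Mat d))).re)
        = (if j = k then α else 0) + β * (d : ℝ)⁻¹ := by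
      intro j k
      have hfk := LinearMap.congr_fun hframe (P k)
      simp only [LinearMap.smul_apply, LinearMap.sum_apply, LinearMap.add_apply,
        LinearMap.id_apply, outerSO_apply'] at hfk
      have hone : ((hermOne d : HermM d) : Mat d) = 1 := rfl
      rw [hone] at hfk
      simp only [htre, inv_inv, one_mul] at hfk
      -- hfk : d • ∑ j, d • (tr (Pj Pk)).re • P j = α • P k + β • (d⁻¹ • hermOne d)
      have heq : ∑ i, ((d : ℝ) * ((d : ℝ) * (Matrix.trace ((P i : Mat d) * (P k : Mat d))).re)
          - (if i = k then α else 0) - β * (d : ℝ)⁻¹) • P i = 0 := by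
        have e1 : ∑ i, ((d : ℝ) * ((d : ℝ) *
            (Matrix.trace ((P i : Mat d) * (P k : Mat d))).re)) • P i
            = (d : ℝ) • ∑ i, (d : ℝ) •
              ((Matrix.trace ((P i : Mat d) * (P k : Mat d))).re • P i) := by
          rw [Finset.smul_sum]
          exact Finset.sum_congr rfl (fun i _ => by rw [smul_smul, smul_smul, mul_assoc])
        have e2 : ∑ i, ((if i = k then α else 0) : ℝ) • P i = α • P k := by
          simp [ite_smul]
        have e3 : ∑ i, (β * (d : ℝ)⁻¹) • P i = (β * (d : ℝ)⁻¹) • hermOne d := by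
          rw [← Finset.smul_sum, hsum']
        calc ∑ i, ((d : ℝ) * ((d : ℝ) * (Matrix.trace ((P i : Mat d) * (P k : Mat d))).re)
              - (if i = k then α else 0) - β * (d : ℝ)⁻¹) • P i
            = ∑ i, (((d : ℝ) * ((d : ℝ) *
                  (Matrix.trace ((P i : Mat d) * (P k : Mat d))).re)) • P i
                - ((if i = k then α else 0) : ℝ) • P i - (β * (d : ℝ)⁻¹) • P i) :=
              Finset.sum_congr rfl (fun i _ => by module)
          _ = 0 := by
              rw [Finset.sum_sub_distrib, Finset.sum_sub_distrib, e1, e2, e3, hfk, smul_smul]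
              abel
      have := Fintype.linearIndependent_iff.mp hli _ heq j
      linarith [this]
    -- trace (Pj Pk) is real
    have hreal : ∀ j k, Matrix.trace ((P j : Mat d) * (P k : Mat d))
        = ((Matrix.trace ((P j : Mat d) * (P k : Mat d))).re : ℂ) := by
      intro j k
      have hsa : star (Matrix.trace ((P j : Mat d) * (P k : Mat d)))
          = Matrix.trace ((P j : Mat d) * (P k : Mat d)) := by
        rw [← trace_conjTranspose, conjTranspose_mul, (hpsd j).1.eq, (hpsd k).1.eq,
          trace_mul_comm]
      have hsa' : (starRingEnd ℂ) (Matrix.trace ((P j : Mat d) * (P k : Mat d)))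
          = Matrix.trace ((P j : Mat d) * (P k : Mat d)) := hsa
      exact (Complex.conj_eq_iff_re.mp hsa').symm
    refine ⟨α, β * (d : ℝ)⁻¹, hα, fun j k => ?_⟩
    rw [hscale j k, hreal j k]
    have hj := key j k
    by_cases hjk : j = k
    · rw [if_pos hjk]
      rw [if_pos hjk] at hj
      rw [show ((d:ℂ) * (d:ℂ)) * ((Matrix.trace ((P j : Mat d) * (P k : Mat d))).re : ℂ)
          = (((d : ℝ) * ((d : ℝ) * (Matrix.trace ((P j : Mat d) * (P k : Mat d))).re) : ℝ) : ℂ)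
          by push_cast; ring, hj]
      push_cast; ring
    · rw [if_neg hjk]
      rw [if_neg hjk] at hj
      rw [show ((d:ℂ) * (d:ℂ)) * ((Matrix.trace ((P j : Mat d) * (P k : Mat d))).re : ℂ)
          = (((d : ℝ) * ((d : ℝ) * (Matrix.trace ((P j : Mat d) * (P k : Mat d))).re) : ℝ) : ℂ)
          by push_cast; ring, hj]
      push_cast; ring
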